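/- Let K be a UFD of characteristic p > 0, let A = K[x_1,…,x_n] be the polynomial algebra with m,n ≥ 1, and let f_1,…,f_m ∈ A. If Q is a prime ideal of A containing every m×m jacobian minor jac^{f_1,…,f_m}_{j_1,…,j_m} (j_1,…,j_m ∈ {1,…,n}), then there exist an index i ∈ {1,…,m} and polynomials b,c ∈ K[x_1^p,…,x_n^p, f_1,…,f_{i-1},f_{i+1},…,f_m] with b ∉ Q such that b·f_i + c ∈ Q. -/

import Mathlib

open MvPolynomial

/-- The monomial `f₁^{α₁} ⋯ f_m^{α_m}` for a multi-index `α ∈ Ω_m` (all exponents `< p`). -/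
def pMonomial {S : Type*} [CommRing S] {m p : ℕ} (f : Fin m → S) (α : Fin m → Fin p) : S :=
  ∏ i, f i ^ (α i : ℕ)

/-- `f₁, …, f_m` are `p`-independent over the subring `B`. -/
def pIndependent {S : Type*} [CommRing S] (B : Subring S) {m : ℕ} (p : ℕ) (f : Fin m → S) : Prop :=
  ∀ b : (Fin m → Fin p) → S, (∀ α, b α ∈ B) →
    ∑ α : Fin m → Fin p, b α * pMonomial f α = 0 → ∀ α, b α = 0

/-- `f₁, …, f_m` form a `p`-basis of `R` over `B`. -/
def IsPBasis {S : Type*} [CommRing S] (B : Subring S) (R : Set S) {m : ℕ} (p : ℕ)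
    (f : Fin m → S) : Prop :=
  (↑B ⊆ R) ∧ (∀ α : Fin m → Fin p, pMonomial f α ∈ R) ∧ pIndependent B p f ∧
    ∀ r ∈ R, ∃ b : (Fin m → Fin p) → S, (∀ α, b α ∈ B) ∧
      r = ∑ α : Fin m → Fin p, b α * pMonomial f α

/-- The jacobian determinant of `f₁,…,f_m` w.r.t. the variables `x_{j₁},…,x_{j_m}`. -/
noncomputable def jacMinor {K : Type*} [CommRing K] {n m : ℕ} (f : Fin m → MvPolynomial (Fin n) K)
    (j : Fin m → Fin n) : MvPolynomial (Fin n) K :=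
  (Matrix.of fun i l => pderiv (j l) (f i)).det

/-- The subring `B = K[x₁^p, …, x_n^p]` of `K[x₁,…,x_n]`. -/
noncomputable def pPowers (K : Type*) [CommRing K] (n p : ℕ) : Subring (MvPolynomial (Fin n) K) :=
  (Algebra.adjoin K (Set.range fun i : Fin n => (X i : MvPolynomial (Fin n) K) ^ p)).toSubring

/-- `R_i = B[f₁,…,f̂ᵢ,…,f_m]`. -/
noncomputable def Ri (K : Type*) [CommRing K] {n m : ℕ} (p : ℕ) (f : Fin m → MvPolynomial (Fin n) K)
    (i : Fin m) : Subring (MvPolynomial (Fin n) K) :=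
  Subring.closure (↑(pPowers K n p) ∪ (f '' {j | j ≠ i}))

/-- `R_{ij} = B[f₁,…,f̂ᵢ,…,f̂ⱼ,…,f_m]`. -/
noncomputable def Rij (K : Type*) [CommRing K] {n m : ℕ} (p : ℕ) (f : Fin m → MvPolynomial (Fin n) K)
    (i j : Fin m) : Subring (MvPolynomial (Fin n) K) :=
  Subring.closure (↑(pPowers K n p) ∪ (f '' {l | l ≠ i ∧ l ≠ j}))

/-- An element is `B`-free if it has no noninvertible factor from `B`. -/
def BFree {S : Type*} [CommRing S] (B : Subring S) (a : S) : Prop :=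
  ∀ b ∈ B, b ∣ a → IsUnit b

/-- `C_B(f₁,…,f_m) = B₀(f₁,…,f_m) ∩ A`: those elements of `A` lying in the field of
fractions of `B[f₁,…,f_m]`. -/
def CB {S : Type*} [CommRing S] (B : Subring S) {m : ℕ} (f : Fin m → S) : Set S :=
  {a | ∃ s t : S, s ∈ Subring.closure (↑B ∪ Set.range f) ∧
      t ∈ Subring.closure (↑B ∪ Set.range f) ∧ s ≠ 0 ∧ a * s = t}

/-- A `B`-derivation of `A`: additive, Leibniz rule, vanishing on `B`. -/
def IsBDerivation {S : Type*} [CommRing S] (B : Subring S) (d : S → S) : Prop :=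
  (∀ x y, d (x + y) = d x + d y) ∧ (∀ x y, d (x * y) = x * d y + y * d x) ∧ ∀ b ∈ B, d b = 0


set_option maxHeartbeats 1000000
set_option synthInstance.maxHeartbeats 1000000

section AuxLemmas


/-- Extend a derivation-on-a-subfield through adjunction of an element whose
`p`-th power lies in the subfield. -/
lemma derivation_adjoin_step {L : Type*} [Field L] {p : ℕ} (hp : p.Prime) [CharP L p]
    (E : Subfield L) (d : L → L)
    (hadd : ∀ x ∈ E, ∀ y ∈ E, d (x + y) = d x + d y)
    (hmul : ∀ x ∈ E, ∀ y ∈ E, d (x * y) = x * d y + y * d x)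
    (u v : L) (hu : u ^ p ∈ E) (hdu : d (u ^ p) = 0) :
    ∃ (E' : Subfield L) (d' : L → L), E ≤ E' ∧ u ∈ E' ∧
      (∀ x ∈ E', ∀ y ∈ E', d' (x + y) = d' x + d' y) ∧
      (∀ x ∈ E', ∀ y ∈ E', d' (x * y) = x * d' y + y * d' x) ∧
      (∀ x ∈ E, d' x = d x) ∧ (u ∉ E → d' u = v) := by
  classical
  haveI : Fact p.Prime := ⟨hp⟩
  have d0 : d 0 = 0 := by
    have h := hadd 0 E.zero_mem 0 E.zero_mem
    rw [add_zero] at h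
    exact (left_eq_add.mp h)
  have d1 : d 1 = 0 := by
    have h := hmul 1 E.one_mem 1 E.one_mem
    rw [mul_one, one_mul] at h
    exact (left_eq_add.mp h)
  by_cases hue : u ∈ E
  · exact ⟨E, d, le_rfl, hue, hadd, hmul, fun _ _ => rfl, fun h => absurd hue h⟩
  set c : ↥E := ⟨u ^ p, hu⟩ with hc
  have hb : ∀ b : ↥E, b ^ p ≠ c := by
    intro b hb
    apply hue
    have h1 : (↑b : L) ^ p = u ^ p := by
      have := congrArg (Subtype.val) hb
      simpa using this
    have h2 : ((↑b : L) - u) ^ p = 0 := by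
      rw [sub_pow_char, h1, sub_self]
    have h3 : (↑b : L) = u := by
      have := pow_eq_zero_iff (n := p) hp.ne_zero |>.mp h2
      linear_combination this
    rw [← h3]; exact b.2
  have hirr : Irreducible ((Polynomial.X : Polynomial ↥E) ^ p - Polynomial.C c) :=
    X_pow_sub_C_irreducible_of_prime hp hb
  have haev : (Polynomial.aeval u) (Polynomial.X ^ p - Polynomial.C c : Polynomial ↥E) = 0 := by
    rw [map_sub, map_pow, Polynomial.aeval_X, Polynomial.aeval_C]
    show u ^ p - (↑c : L) = 0
    rw [hc]
    simp
  have hmonic : (Polynomial.X ^ p - Polynomial.C c : Polynomial ↥E).Monic :=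
    Polynomial.monic_X_pow_sub_C c hp.ne_zero
  have hint : IsIntegral ↥E u := ⟨Polynomial.X ^ p - Polynomial.C c, hmonic, haev⟩
  have hmin : minpoly ↥E u = Polynomial.X ^ p - Polynomial.C c :=
    (minpoly.eq_of_irreducible_of_monic hirr haev hmonic).symm
  -- the twisted evaluation map
  set Ψ : Polynomial ↥E → L := fun g => g.sum fun k a => d ↑a * u ^ k with hΨdef
  have Ψadd : ∀ g h : Polynomial ↥E, Ψ (g + h) = Ψ g + Ψ h := by
    intro g h
    refine Polynomial.sum_add_index g h _ (fun i => by simp [d0]) ?_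
    intro a b₁ b₂
    have : d ↑(b₁ + b₂) = d ↑b₁ + d ↑b₂ := hadd _ b₁.2 _ b₂.2
    rw [this, add_mul]
  have Ψmon : ∀ (k : ℕ) (a : ↥E), Ψ (Polynomial.monomial k a) = d ↑a * u ^ k := by
    intro k a
    exact Polynomial.sum_monomial_index a _ (by simp [d0])
  have ΨC : ∀ a : ↥E, Ψ (Polynomial.C a) = d ↑a := by
    intro a
    rw [← Polynomial.monomial_zero_left, Ψmon, pow_zero, mul_one]
  have Ψmul : ∀ g h : Polynomial ↥E, Ψ (g * h) = Ψ g * (Polynomial.aeval u) h + (Polynomial.aeval u) g * Ψ h := by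
    intro g h
    induction h using Polynomial.induction_on' with
    | add q r hq hr =>
      rw [mul_add, Ψadd, hq, hr, map_add, Ψadd]; ring
    | monomial l b =>
      induction g using Polynomial.induction_on' with
      | add q r hq hr =>
        rw [add_mul, Ψadd, hq, hr, map_add, Ψadd]; ring
      | monomial k a =>
        rw [Polynomial.monomial_mul_monomial, Ψmon, Ψmon, Ψmon, Polynomial.aeval_monomial, Polynomial.aeval_monomial]
        have hd : d ↑(a * b) = ↑a * d ↑b + ↑b * d ↑a := by
          rw [show ((↑(a*b) : L) = ↑a * ↑b) from rfl]
          exact hmul _ a.2 _ b.2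
        rw [hd]
        show (↑a * d ↑b + ↑b * d ↑a) * u ^ (k + l)
          = d ↑a * u ^ k * ((algebraMap ↥E L) b * u ^ l)
            + (algebraMap ↥E L) a * u ^ k * (d ↑b * u ^ l)
        show (↑a * d ↑b + ↑b * d ↑a) * u ^ (k + l)
          = d ↑a * u ^ k * (↑b * u ^ l) + ↑a * u ^ k * (d ↑b * u ^ l)
        rw [pow_add]; ring
  set Φ : Polynomial ↥E → L := fun g => Ψ g + (Polynomial.aeval u) (Polynomial.derivative g) * v with hΦdef
  have Φadd : ∀ g h : Polynomial ↥E, Φ (g + h) = Φ g + Φ h := by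
    intro g h
    simp only [hΦdef, Ψadd, Polynomial.derivative_add, map_add]; ring
  have Φmul : ∀ g h : Polynomial ↥E, Φ (g * h) = Φ g * (Polynomial.aeval u) h + (Polynomial.aeval u) g * Φ h := by
    intro g h
    simp only [hΦdef, Ψmul, Polynomial.derivative_mul, map_add, map_mul]; ring
  have ΦC : ∀ a : ↥E, Φ (Polynomial.C a) = d ↑a := by
    intro a
    simp only [hΦdef, ΨC, Polynomial.derivative_C, map_zero, zero_mul, add_zero]
  have ΦX : Φ (Polynomial.X : Polynomial ↥E) = v := by
    have h1 : Ψ (Polynomial.X : Polynomial ↥E) = 0 := by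
      rw [← Polynomial.monomial_one_one_eq_X, Ψmon]
      show d 1 * u ^ 1 = 0
      rw [d1, zero_mul]
    simp only [hΦdef, h1, Polynomial.derivative_X, map_one, one_mul, zero_add]
  have ΦM : Φ (Polynomial.X ^ p - Polynomial.C c) = 0 := by
    have hXp : Ψ ((Polynomial.X : Polynomial ↥E) ^ p) = 0 := by
      rw [Polynomial.X_pow_eq_monomial, Ψmon]
      show d 1 * u ^ p = 0
      rw [d1, zero_mul]
    have hnegc : Ψ (-Polynomial.C c) = 0 := by
      rw [← map_neg, ΨC]
      show d (-(u ^ p)) = 0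
      have h := hadd (u ^ p) hu (-(u ^ p)) (E.neg_mem hu)
      rw [add_neg_cancel, d0, hdu, zero_add] at h
      exact h.symm
    have hpE : ((p : ℕ) : ↥E) = 0 := by
      have : ((p : ℕ) : L) = 0 := CharP.cast_eq_zero L p
      exact_mod_cast Subtype.ext (by push_cast; exact this)
    have hder : (Polynomial.aeval u) (Polynomial.derivative (Polynomial.X ^ p - Polynomial.C c : Polynomial ↥E)) = 0 := by
      rw [Polynomial.derivative_sub, Polynomial.derivative_C, sub_zero, Polynomial.derivative_X_pow, hpE, map_zero, zero_mul,
        map_zero]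
    have hsub : (Polynomial.X ^ p - Polynomial.C c : Polynomial ↥E) = Polynomial.X ^ p + (-Polynomial.C c) := sub_eq_add_neg _ _
    show Ψ (Polynomial.X ^ p - Polynomial.C c) + (Polynomial.aeval u) (Polynomial.derivative (Polynomial.X ^ p - Polynomial.C c)) * v = 0
    rw [hder, zero_mul, add_zero, hsub, Ψadd, hXp, hnegc, add_zero]
  have Φwd : ∀ g h : Polynomial ↥E, (Polynomial.aeval u) g = (Polynomial.aeval u) h → Φ g = Φ h := by
    intro g h hgh
    have h0 : (Polynomial.aeval u) (g - h) = 0 := by rw [map_sub, hgh, sub_self]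
    have hdvd : minpoly ↥E u ∣ g - h := minpoly.dvd _ _ h0
    rw [hmin] at hdvd
    obtain ⟨q, hq⟩ := hdvd
    have hgeq : g = h + (Polynomial.X ^ p - Polynomial.C c) * q := sub_eq_iff_eq_add'.mp hq
    rw [hgeq, Φadd, Φmul, ΦM, haev, zero_mul, zero_mul, add_zero, add_zero]
  set E' : Subfield L := (IntermediateField.adjoin ↥E ({u} : Set L)).toSubfield with hE'def
  have hmem : ∀ x : L, x ∈ E' ↔ ∃ g : Polynomial ↥E, (Polynomial.aeval u) g = x := by
    intro x
    constructor
    · intro hxE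
      have hx2 : x ∈ Algebra.adjoin ↥E ({u} : Set L) := by
        rw [← IntermediateField.adjoin_simple_toSubalgebra_of_isAlgebraic hint.isAlgebraic]
        exact hxE
      rw [Algebra.adjoin_singleton_eq_range_aeval ↥E u] at hx2
      exact hx2
    · rintro ⟨g, hg⟩
      have hx2 : x ∈ Algebra.adjoin ↥E ({u} : Set L) := by
        rw [Algebra.adjoin_singleton_eq_range_aeval ↥E u]
        exact ⟨g, hg⟩
      rw [← IntermediateField.adjoin_simple_toSubalgebra_of_isAlgebraic hint.isAlgebraic] at hx2
      exact hx2
  set d' : L → L :=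
    fun x => if hx : ∃ g : Polynomial ↥E, (Polynomial.aeval u) g = x then Φ hx.choose else 0 with hd'def
  have hwd : ∀ g : Polynomial ↥E, d' ((Polynomial.aeval u) g) = Φ g := by
    intro g
    have hex : ∃ g' : Polynomial ↥E, (Polynomial.aeval u) g' = (Polynomial.aeval u) g := ⟨g, rfl⟩
    rw [hd'def]
    simp only
    rw [dif_pos hex]
    exact Φwd _ _ hex.choose_spec
  refine ⟨E', d', ?_, ?_, ?_, ?_, ?_, ?_⟩
  · intro x hx
    rw [hmem]
    exact ⟨Polynomial.C ⟨x, hx⟩, by rw [Polynomial.aeval_C]; rfl⟩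
  · rw [hmem]; exact ⟨Polynomial.X, Polynomial.aeval_X u⟩
  · intro x hx y hy
    rw [hmem] at hx hy
    obtain ⟨g, rfl⟩ := hx
    obtain ⟨h, rfl⟩ := hy
    rw [← map_add, hwd, hwd, hwd, Φadd]
  · intro x hx y hy
    rw [hmem] at hx hy
    obtain ⟨g, rfl⟩ := hx
    obtain ⟨h, rfl⟩ := hy
    rw [← map_mul, hwd, hwd, hwd, Φmul]
    ring
  · intro x hx
    have hxeq : (Polynomial.aeval u) (Polynomial.C (⟨x, hx⟩ : ↥E)) = x := by rw [Polynomial.aeval_C]; rfl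
    conv_lhs => rw [← hxeq]
    rw [hwd, ΦC]
  · intro _
    conv_lhs => rw [show u = (Polynomial.aeval u) (Polynomial.X : Polynomial ↥E) from (Polynomial.aeval_X u).symm]
    rw [hwd, ΦX]


lemma derivation_tower {L : Type*} [Field L] {p : ℕ} (hp : p.Prime) [CharP L p] (F : Subfield L)
    (s : List L) (hs : ∀ u ∈ s, u ^ p ∈ F) :
    ∀ (E : Subfield L) (d : L → L), F ≤ E →
    (∀ x ∈ E, ∀ y ∈ E, d (x + y) = d x + d y) →
    (∀ x ∈ E, ∀ y ∈ E, d (x * y) = x * d y + y * d x) →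
    (∀ x ∈ F, d x = 0) →
    ∃ (E' : Subfield L) (d' : L → L), E ≤ E' ∧ (∀ u ∈ s, u ∈ E') ∧
      (∀ x ∈ E', ∀ y ∈ E', d' (x + y) = d' x + d' y) ∧
      (∀ x ∈ E', ∀ y ∈ E', d' (x * y) = x * d' y + y * d' x) ∧
      (∀ x ∈ E, d' x = d x) := by
  induction s with
  | nil =>
    intro E d hFE hadd hmul hF
    exact ⟨E, d, le_rfl, by simp, hadd, hmul, fun _ _ => rfl⟩
  | cons u s ih =>
    intro E d hFE hadd hmul hF
    have hup : u ^ p ∈ F := hs u (List.mem_cons_self (a := u) (l := s))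
    obtain ⟨E₁, d₁, hEE₁, huE₁, hadd₁, hmul₁, hext₁, _⟩ :=
      derivation_adjoin_step hp E d hadd hmul u 0 (hFE hup) (hF _ hup)
    obtain ⟨E', d', hE₁E', hsE', hadd', hmul', hext'⟩ :=
      ih (fun w hw => hs w (List.mem_cons_of_mem u hw)) E₁ d₁ (le_trans hFE hEE₁) hadd₁ hmul₁
        (fun x hx => by rw [hext₁ x (hFE hx)]; exact hF x hx)
    refine ⟨E', d', le_trans hEE₁ hE₁E', ?_, hadd', hmul', ?_⟩
    · intro w hw
      rcases List.mem_cons.mp hw with h | h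
      · rw [h]; exact hE₁E' huE₁
      · exact hsE' w h
    · intro x hx
      rw [hext' x (hEE₁ hx)]
      exact hext₁ x hx


lemma derivation_chain_rule {K : Type*} [CommRing K] {n : ℕ} {L : Type*} [Field L]
    (φ : MvPolynomial (Fin n) K →+* L) (S : Subfield L) (hS : ∀ a, φ a ∈ S)
    (d : L → L)
    (hadd : ∀ x ∈ S, ∀ y ∈ S, d (x + y) = d x + d y)
    (hmul : ∀ x ∈ S, ∀ y ∈ S, d (x * y) = x * d y + y * d x)
    (hC : ∀ k : K, d (φ (MvPolynomial.C k)) = 0) (a : MvPolynomial (Fin n) K) :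
    d (φ a) = ∑ j : Fin n, φ (MvPolynomial.pderiv j a) * d (φ (MvPolynomial.X j)) := by
  induction a using MvPolynomial.induction_on with
  | C k => simp [hC k]
  | add q r hq hr =>
    rw [map_add, hadd _ (hS q) _ (hS r), hq, hr, ← Finset.sum_add_distrib]
    apply Finset.sum_congr rfl
    intro j _
    rw [map_add, map_add, add_mul]
  | mul_X q j hq =>
    rw [map_mul, hmul _ (hS q) _ (hS (MvPolynomial.X j)), hq]
    have hpd : ∀ l : Fin n, MvPolynomial.pderiv l (q * MvPolynomial.X j)
        = MvPolynomial.pderiv l q * MvPolynomial.X j + if j = l then q else 0 := by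
      intro l
      rw [MvPolynomial.pderiv_mul]
      congr 1
      by_cases h : j = l
      · subst h; rw [MvPolynomial.pderiv_X_self, mul_one, if_pos rfl]
      · rw [MvPolynomial.pderiv_X_of_ne h, mul_zero, if_neg h]
    have hterm : ∀ l : Fin n, φ (MvPolynomial.pderiv l (q * MvPolynomial.X j)) * d (φ (MvPolynomial.X l))
        = φ (MvPolynomial.pderiv l q) * φ (MvPolynomial.X j) * d (φ (MvPolynomial.X l))
          + (if j = l then φ q * d (φ (MvPolynomial.X l)) else 0) := by
      intro l
      rw [hpd l, map_add, add_mul, map_mul, apply_ite φ, map_zero, ite_mul, zero_mul]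
    rw [Finset.sum_congr rfl (fun l _ => hterm l), Finset.sum_add_distrib,
      Finset.sum_ite_eq Finset.univ j (fun l => φ q * d (φ (MvPolynomial.X l))),
      if_pos (Finset.mem_univ j), add_comm (φ q * d (φ (MvPolynomial.X j)))]
    congr 1
    rw [Finset.mul_sum]
    exact Finset.sum_congr rfl fun l _ => by ring

lemma pow_p_mem_pPowers {K : Type*} [CommRing K] {p : ℕ} [CharP K p] (hp : p.Prime)
    {n : ℕ} (a : MvPolynomial (Fin n) K) : a ^ p ∈ pPowers K n p := by
  haveI : Fact p.Prime := ⟨hp⟩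
  rw [pPowers, Subalgebra.mem_toSubring]
  induction a using MvPolynomial.induction_on with
  | C k =>
    rw [← C_pow]
    exact Subalgebra.algebraMap_mem _ (k ^ p)
  | add q r hq hr =>
    rw [add_pow_char]
    exact add_mem hq hr
  | mul_X q j hq =>
    rw [mul_pow]
    exact mul_mem hq (Algebra.subset_adjoin ⟨j, rfl⟩)

end AuxLemmas

/-- **Proposition 2.** If a prime ideal `Q` of `K[x₁,…,x_n]` contains every `m×m` jacobian
minor of `f₁,…,f_m`, then there exist `i` and `b, c ∈ K[x₁^p,…,x_n^p, f₁,…,f̂ᵢ,…,f_m]`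
with `b ∉ Q` such that `b·fᵢ + c ∈ Q`. -/
theorem exists_bfc_mem_prime_of_jac_subset
    {K : Type*} [CommRing K] [IsDomain K] [UniqueFactorizationMonoid K]
    (p : ℕ) (hp : 0 < p) [CharP K p] {n m : ℕ} (hm : 1 ≤ m) (hn : 1 ≤ n)
    (f : Fin m → MvPolynomial (Fin n) K)
    (Q : Ideal (MvPolynomial (Fin n) K)) (hQ : Q.IsPrime)
    (hjac : ∀ j : Fin m → Fin n, jacMinor f j ∈ Q) :
    ∃ i : Fin m, ∃ b c : MvPolynomial (Fin n) K,
      b ∈ Ri K p f i ∧ c ∈ Ri K p f i ∧ b ∉ Q ∧ b * f i + c ∈ Q := by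
  classical
  haveI := hQ
  have hpprime : p.Prime := CharP.char_prime_of_ne_zero K hp.ne'
  haveI : Fact p.Prime := ⟨hpprime⟩
  by_contra hcon
  push_neg at hcon
  set L := FractionRing (MvPolynomial (Fin n) K ⧸ Q) with hL
  set φ : MvPolynomial (Fin n) K →+* L :=
    (algebraMap (MvPolynomial (Fin n) K ⧸ Q) L).comp (Ideal.Quotient.mk Q) with hφ
  have hφ0 : ∀ a : MvPolynomial (Fin n) K, φ a = 0 ↔ a ∈ Q := by
    intro a
    rw [hφ, RingHom.comp_apply,
      map_eq_zero_iff (algebraMap (MvPolynomial (Fin n) K ⧸ Q) L) (IsFractionRing.injective _ _),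
      Ideal.Quotient.eq_zero_iff_mem]
  have hpL : ((p : ℕ) : L) = 0 := by
    have h1 : ((p : ℕ) : MvPolynomial (Fin n) K) = 0 := CharP.cast_eq_zero _ p
    rw [← map_natCast φ p, h1, map_zero]
  haveI : CharP L p := (CharP.charP_iff_prime_eq_zero hpprime).mpr hpL
  set F : Fin m → Subfield L := fun i => Subfield.closure (φ '' (Ri K p f i : Set (MvPolynomial (Fin n) K))) with hF
  have hRiF : ∀ i, ∀ a ∈ Ri K p f i, φ a ∈ F i := fun i a ha =>
    Subfield.subset_closure ⟨a, ha, rfl⟩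
  have hBmem : ∀ (i : Fin m), ∀ x ∈ pPowers K n p, x ∈ Ri K p f i := fun i x hx =>
    Subring.subset_closure (Set.mem_union_left _ hx)
  have hflRi : ∀ (i l : Fin m), l ≠ i → f l ∈ Ri K p f i := fun i l hl =>
    Subring.subset_closure (Set.mem_union_right _ ⟨l, hl, rfl⟩)
  have hCRi : ∀ (i : Fin m) (k : K), C k ∈ Ri K p f i := by
    intro i k
    apply hBmem
    rw [pPowers, Subalgebra.mem_toSubring]
    exact Subalgebra.algebraMap_mem _ k
  -- the images of the `f i` are not in the fraction fields of the `Ri`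
  have hfiF : ∀ i, φ (f i) ∉ F i := by
    intro i hmem
    rw [hF] at hmem
    rw [Subfield.mem_closure_iff] at hmem
    obtain ⟨y, hy, z, hz, hyz⟩ := hmem
    have hcl : Subring.closure (φ '' (Ri K p f i : Set (MvPolynomial (Fin n) K))) = (Ri K p f i).map φ := by
      rw [← Subring.coe_map, Subring.closure_eq]
    rw [hcl] at hy hz
    obtain ⟨t, ht, rfl⟩ := hy
    obtain ⟨s, hs, rfl⟩ := hz
    by_cases hz0 : φ s = 0
    · rw [hz0, div_zero] at hyz
      have hfQ : f i ∈ Q := (hφ0 _).mp hyz.symm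
      exact hcon i 1 0 (one_mem _) (zero_mem _) (Ideal.ne_top_iff_one Q |>.mp hQ.ne_top)
        (by rwa [one_mul, add_zero])
    · have hsQ : s ∉ Q := fun h => hz0 ((hφ0 s).mpr h)
      have ht2 : φ t = φ (f i) * φ s := (div_eq_iff hz0).mp hyz
      have heq : φ (s * f i + -t) = 0 := by
        rw [map_add, map_mul, map_neg, ht2]; ring
      exact hcon i s (-t) hs (Subring.neg_mem _ ht) hsQ ((hφ0 _).mp heq)
  -- construct, for each i, a derivation-like map D on a subfield containing the image of A
  have hD : ∀ i : Fin m, ∃ D : L → L,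
      (∀ a : MvPolynomial (Fin n) K, D (φ a) = ∑ j : Fin n, φ (pderiv j a) * D (φ (X j))) ∧
      D (φ (f i)) = 1 ∧ (∀ l : Fin m, l ≠ i → D (φ (f l)) = 0) := by
    intro i
    have hadd0 : ∀ x ∈ F i, ∀ y ∈ F i, (fun _ : L => (0:L)) (x + y)
        = (fun _ : L => (0:L)) x + (fun _ : L => (0:L)) y := by intros; simp
    have hmul0 : ∀ x ∈ F i, ∀ y ∈ F i, (fun _ : L => (0:L)) (x * y)
        = x * (fun _ : L => (0:L)) y + y * (fun _ : L => (0:L)) x := by intros; simp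
    have hfip : (φ (f i)) ^ p ∈ F i := by
      rw [← map_pow]
      exact hRiF i _ (hBmem i _ (pow_p_mem_pPowers hpprime (f i)))
    obtain ⟨E₁, d₁, hFE₁, huE₁, hadd₁, hmul₁, hext₁, hdu₁⟩ :=
      derivation_adjoin_step hpprime (F i) (fun _ => (0:L)) hadd0 hmul0 (φ (f i)) 1 hfip rfl
    have hd₁fi : d₁ (φ (f i)) = 1 := hdu₁ (hfiF i)
    have hd₁F : ∀ x ∈ F i, d₁ x = 0 := fun x hx => hext₁ x hx
    set xs : List L := (List.finRange n).map (fun j => φ (X j)) with hxs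
    have hxsp : ∀ u ∈ xs, u ^ p ∈ F i := by
      intro u hu
      rw [hxs, List.mem_map] at hu
      obtain ⟨j, _, rfl⟩ := hu
      rw [← map_pow]
      apply hRiF i _ (hBmem i _ _)
      rw [pPowers, Subalgebra.mem_toSubring]
      exact Algebra.subset_adjoin ⟨j, rfl⟩
    obtain ⟨E₂, d₂, hE₁₂, hxsE₂, hadd₂, hmul₂, hext₂⟩ :=
      derivation_tower hpprime (F i) xs hxsp E₁ d₁ hFE₁ hadd₁ hmul₁ hd₁F
    have hXE₂ : ∀ j : Fin n, φ (X j) ∈ E₂ := by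
      intro j
      exact hxsE₂ _ (by rw [hxs, List.mem_map]; exact ⟨j, List.mem_finRange j, rfl⟩)
    have hAE₂ : ∀ a : MvPolynomial (Fin n) K, φ a ∈ E₂ := by
      intro a
      induction a using MvPolynomial.induction_on with
      | C k => exact hE₁₂ (hFE₁ (hRiF i _ (hCRi i k)))
      | add q r hq hr => rw [map_add]; exact add_mem hq hr
      | mul_X q j hq => rw [map_mul]; exact mul_mem hq (hXE₂ j)
    refine ⟨d₂, ?_, ?_, ?_⟩
    · intro a
      exact derivation_chain_rule φ E₂ hAE₂ d₂ hadd₂ hmul₂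
        (fun k => by
          rw [hext₂ _ (hFE₁ (hRiF i _ (hCRi i k)))]
          exact hd₁F _ (hRiF i _ (hCRi i k))) a
    · rw [hext₂ _ huE₁]; exact hd₁fi
    · intro l hl
      rw [hext₂ _ (hFE₁ (hRiF i _ (hflRi i l hl)))]
      exact hd₁F _ (hRiF i _ (hflRi i l hl))
  choose D hchain hone hzero using hD
  set Jmat : Matrix (Fin m) (Fin n) L := Matrix.of fun l j => φ (pderiv j (f l)) with hJ
  set Nmat : Matrix (Fin n) (Fin m) L := Matrix.of fun j i => D i (φ (X j)) with hN
  have hJN : Jmat * Nmat = 1 := by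
    ext l i
    rw [Matrix.mul_apply]
    have hsum : ∑ j : Fin n, Jmat l j * Nmat j i = D i (φ (f l)) := (hchain i (f l)).symm
    rw [hsum]
    by_cases h : l = i
    · subst h; rw [hone l, Matrix.one_apply_eq]
    · rw [hzero i l h, Matrix.one_apply_ne h]
  have hdet1 : Matrix.det ((Jmat * Nmat).transpose) = 1 := by
    rw [hJN, Matrix.transpose_one, Matrix.det_one]
  have hexp : Matrix.det ((Jmat * Nmat).transpose)
      = ∑ r : Fin m → Fin n, (∏ i, Nmat (r i) i) • Matrix.det (Jmat.transpose.submatrix r id) := by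
    have h0 : ((Jmat * Nmat).transpose : Matrix (Fin m) (Fin m) L)
        = Matrix.of (fun i : Fin m => ∑ j : Fin n, Nmat j i • (Jmat.transpose j)) := by
      ext i l
      simp [Matrix.mul_apply, Matrix.transpose_apply, Finset.sum_apply, mul_comm]
    rw [h0]
    have h1 : Matrix.det (Matrix.of fun i : Fin m => ∑ j : Fin n, Nmat j i • (Jmat.transpose j))
        = (Matrix.detRowAlternating).toMultilinearMap
            (fun i : Fin m => ∑ j : Fin n, Nmat j i • (Jmat.transpose j)) := rfl
    rw [h1, MultilinearMap.map_sum]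
    apply Finset.sum_congr rfl
    intro r _
    rw [MultilinearMap.map_smul_univ]
    rfl
  have hminor : ∀ r : Fin m → Fin n, Matrix.det (Jmat.transpose.submatrix r id) = φ (jacMinor f r) := by
    intro r
    have h2 : (Jmat.transpose.submatrix r id)
        = ((Matrix.of fun i l => pderiv (r l) (f i)).map φ).transpose := by
      ext i l; rfl
    rw [h2, Matrix.det_transpose, jacMinor]
    exact (RingHom.map_det φ (Matrix.of fun i l => pderiv (r l) (f i))).symm
  have hjac0 : ∀ r : Fin m → Fin n, φ (jacMinor f r) = 0 := fun r => (hφ0 _).mpr (hjac r)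
  rw [hexp] at hdet1
  simp only [hminor, hjac0, smul_zero, Finset.sum_const_zero] at hdet1
  exact zero_ne_one hdet1
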